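/- Let ‖·‖ be a monotone norm on ℝ^K, let p̄ > 0, let C := {p ∈ ℝ_{≥0}^K : ‖p‖ ≤ p̄}, and let utility functions u_1,…,u_K satisfy Assumption 1. Denote by B ⊆ ℝ_{≥0}^K the set of utility tuples on the weak Pareto boundary under the constraint C, i.e., B := {(u_1(p*),…,u_K(p*)) : p* ∈ C and there is no p' ∈ C with u_k(p') > u_k(p*) for all k}. Then B = {(u_1(p),…,u_K(p)) : p ∈ ℝ_{≥0}^K and ‖p‖ = p̄}. -/

import Mathlib

open Filter Topology MeasureTheory

/-- The nonnegative orthant of `ℝ^K`. -/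
def NonnegOrth (K : ℕ) : Set (Fin K → ℝ) := {x | ∀ i, 0 ≤ x i}

/-- A standard interference function: positive, monotone and scalable on the
nonnegative orthant. -/
def StdIF {K : ℕ} (f : (Fin K → ℝ) → ℝ) : Prop :=
  (∀ x ∈ NonnegOrth K, 0 < f x) ∧
  (∀ x ∈ NonnegOrth K, ∀ y ∈ NonnegOrth K, (∀ i, y i ≤ x i) → f y ≤ f x) ∧
  (∀ x ∈ NonnegOrth K, ∀ α : ℝ, 1 < α → f (α • x) < α * f x)

/-- Assumption 1: each utility `u k` equals `p k / f k p` on the nonnegative orthant,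
for a continuous standard interference function `f k`. -/
def Assumption1 {K : ℕ} (u f : Fin K → (Fin K → ℝ) → ℝ) : Prop :=
  ∀ k, StdIF (f k) ∧ ContinuousOn (f k) (NonnegOrth K) ∧
    ∀ p ∈ NonnegOrth K, u k p = p k / f k p

/-- A monotone norm on `ℝ^K`. -/
def IsMonoNorm {K : ℕ} (N : (Fin K → ℝ) → ℝ) : Prop :=
  (∀ x, 0 ≤ N x) ∧ (∀ x, N x = 0 ↔ x = 0) ∧
  (∀ (a : ℝ) (x : Fin K → ℝ), N (a • x) = |a| * N x) ∧
  (∀ x y, N (x + y) ≤ N x + N y) ∧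
  (∀ x y : Fin K → ℝ, x ∈ NonnegOrth K → (∀ i, x i ≤ y i) → N x ≤ N y)

/-- The utilities of `p` are on the weak Pareto boundary under the constraint `C`. -/
def WeakPareto {K : ℕ} (u : Fin K → (Fin K → ℝ) → ℝ)
    (C : Set (Fin K → ℝ)) (p : Fin K → ℝ) : Prop :=
  ¬ ∃ p' ∈ C, ∀ k, u k p < u k p'

/-- Feasibility for the weighted max-min problem (1). -/
def Feas1 {K : ℕ} (N : (Fin K → ℝ) → ℝ) (pbar : ℝ) (p : Fin K → ℝ) : Prop :=
  p ∈ NonnegOrth K ∧ N p ≤ pbar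

/-- Optimality for the weighted max-min problem (1):
maximize `min_k (ω k)⁻¹ * u k p` subject to `‖p‖ ≤ pbar`. -/
def Sol1 {K : ℕ} (N : (Fin K → ℝ) → ℝ) (pbar : ℝ) (ω : Fin K → ℝ)
    (u : Fin K → (Fin K → ℝ) → ℝ) (p : Fin K → ℝ) : Prop :=
  Feas1 N pbar p ∧ ∀ q, Feas1 N pbar q →
    (⨅ k, (ω k)⁻¹ * u k q) ≤ ⨅ k, (ω k)⁻¹ * u k p

/-- Feasibility for the epigraph-form problem (2). -/
def Feas2 {K : ℕ} (N : (Fin K → ℝ) → ℝ) (pbar : ℝ) (ω : Fin K → ℝ)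
    (u : Fin K → (Fin K → ℝ) → ℝ) (c : ℝ) (p : Fin K → ℝ) : Prop :=
  0 ≤ c ∧ p ∈ NonnegOrth K ∧ N p ≤ pbar ∧ ∀ k, c * ω k ≤ u k p

/-- Optimality for the epigraph-form problem (2): maximize `c` subject to
`‖p‖ ≤ pbar` and `u k p ≥ c * ω k` for all `k`. -/
def Sol2 {K : ℕ} (N : (Fin K → ℝ) → ℝ) (pbar : ℝ) (ω : Fin K → ℝ)
    (u : Fin K → (Fin K → ℝ) → ℝ) (c : ℝ) (p : Fin K → ℝ) : Prop :=
  Feas2 N pbar ω u c p ∧ ∀ c' p', Feas2 N pbar ω u c' p' → c' ≤ c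

/-- Feasibility for the fixed-point-form problem (4). -/
def Feas4 {K : ℕ} (N : (Fin K → ℝ) → ℝ) (pbar : ℝ)
    (T : (Fin K → ℝ) → Fin K → ℝ) (c : ℝ) (p : Fin K → ℝ) : Prop :=
  0 ≤ c ∧ p ∈ NonnegOrth K ∧ N p ≤ pbar ∧ p = c • T p

/-- Optimality for the fixed-point-form problem (4): maximize `c` subject to
`‖p‖ ≤ pbar` and `p = c • T p`. -/
def Sol4 {K : ℕ} (N : (Fin K → ℝ) → ℝ) (pbar : ℝ)
    (T : (Fin K → ℝ) → Fin K → ℝ) (c : ℝ) (p : Fin K → ℝ) : Prop :=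
  Feas4 N pbar T c p ∧ ∀ c' p', Feas4 N pbar T c' p' → c' ≤ c

/-- Corollary 1: the set of utility tuples on the weak Pareto boundary under
`C = {p ≥ 0 : ‖p‖ ≤ pbar}` is exactly the set of utility tuples of nonnegative
vectors of norm exactly `pbar`. -/
theorem stmt11 {K : ℕ} (N : (Fin K → ℝ) → ℝ) (hN : IsMonoNorm N)
    (pbar : ℝ) (hpbar : 0 < pbar)
    (u f : Fin K → (Fin K → ℝ) → ℝ) (hA : Assumption1 u f) :
    {b : Fin K → ℝ | ∃ p, (p ∈ NonnegOrth K ∧ N p ≤ pbar) ∧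
        WeakPareto u {q | q ∈ NonnegOrth K ∧ N q ≤ pbar} p ∧ b = fun k => u k p} =
    {b : Fin K → ℝ | ∃ p, p ∈ NonnegOrth K ∧ N p = pbar ∧ b = fun k => u k p} := by
  obtain ⟨hN0, hNzero, hNsmul, hNadd, hNmono⟩ := hN
  have hfpos : ∀ k, ∀ x ∈ NonnegOrth K, 0 < f k x := fun k => (hA k).1.1
  have hfmono : ∀ k, ∀ x ∈ NonnegOrth K, ∀ y ∈ NonnegOrth K, (∀ i, y i ≤ x i) → f k y ≤ f k x :=
    fun k => (hA k).1.2.1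
  have hfscal : ∀ k, ∀ x ∈ NonnegOrth K, ∀ α : ℝ, 1 < α → f k (α • x) < α * f k x :=
    fun k => (hA k).1.2.2
  have hfcont : ∀ k, ContinuousOn (f k) (NonnegOrth K) := fun k => (hA k).2.1
  have hu : ∀ k, ∀ p ∈ NonnegOrth K, u k p = p k / f k p := fun k => (hA k).2.2
  ext b
  simp only [Set.mem_setOf_eq]
  constructor
  · rintro ⟨p, ⟨hp, hple⟩, hWP, rfl⟩
    refine ⟨p, hp, ?_, rfl⟩
    by_contra hne
    have hlt : N p < pbar := lt_of_le_of_ne hple hne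
    exfalso
    apply hWP
    have hNp0 : 0 ≤ N p := hN0 p
    set s : ℝ := (pbar - N p) / (2 * (N p + 1)) with hs_def
    have hs : 0 < s := div_pos (by linarith) (by linarith)
    set t : ℝ := 1 + s with ht_def
    have ht1 : (1:ℝ) < t := by simp only [ht_def]; linarith
    have htNp : t * N p < pbar := by
      have h2 : s * (N p + 1) = (pbar - N p) / 2 := by
        rw [hs_def]; field_simp
      have h3 : s * N p ≤ s * (N p + 1) := by nlinarith
      simp only [ht_def]; nlinarith
    set one : Fin K → ℝ := fun _ => (1:ℝ) with hone
    set q : ℝ → Fin K → ℝ := fun ε => t • p + ε • one with hq_def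
    have hqk : ∀ (ε : ℝ) (k : Fin K), q ε k = t * p k + ε := by
      intro ε k; simp [hq_def, hone]
    have hqorth : ∀ ε ≥ (0:ℝ), q ε ∈ NonnegOrth K := by
      intro ε hε k
      rw [hqk]
      have := hp k
      nlinarith
    have hq0 : q 0 = t • p := by simp [hq_def]
    have htporth : t • p ∈ NonnegOrth K := by
      intro k
      simp only [Pi.smul_apply, smul_eq_mul]
      exact mul_nonneg (by linarith) (hp k)
    have hevN : ∀ᶠ ε in 𝓝[>] (0:ℝ), N (q ε) ≤ pbar := by
      have htt : Filter.Tendsto (fun ε : ℝ => t * N p + ε * N one) (𝓝[>] 0)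
          (𝓝 (t * N p + 0 * N one)) :=
        ((continuous_const.add (continuous_id.mul continuous_const)).tendsto 0).mono_left
          nhdsWithin_le_nhds
      have h2 : ∀ᶠ ε in 𝓝[>] (0:ℝ), t * N p + ε * N one < pbar :=
        htt.eventually_lt_const (by simpa using htNp)
      filter_upwards [h2, self_mem_nhdsWithin] with ε hlt' hε
      have hε' : (0:ℝ) < ε := hε
      calc N (q ε) ≤ N (t • p) + N (ε • one) := hNadd _ _
        _ = t * N p + ε * N one := by
            rw [hNsmul, hNsmul, abs_of_pos (by linarith : (0:ℝ) < t), abs_of_pos hε']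
        _ ≤ pbar := hlt'.le
    have hevU : ∀ᶠ ε in 𝓝[>] (0:ℝ), ∀ k, u k p < u k (q ε) := by
      rw [Filter.eventually_all]
      intro k
      rcases eq_or_lt_of_le (hp k) with hpk | hpk
      · filter_upwards [self_mem_nhdsWithin] with ε hε
        have hε' : (0:ℝ) < ε := hε
        have hqo := hqorth ε hε'.le
        have h1 : u k p = 0 := by rw [hu k p hp, ← hpk, zero_div]
        have h2 : u k (q ε) = ε / f k (q ε) := by
          rw [hu k _ hqo, hqk, ← hpk, mul_zero, zero_add]
        rw [h1, h2]
        exact div_pos hε' (hfpos k _ hqo)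
      · have hd0 : 0 < f k (t • p) := hfpos k _ htporth
        have hval : u k p < (t * p k) / f k (t • p) := by
          have hscal := hfscal k p hp t ht1
          rw [hu k p hp]
          have heq : p k / f k p = (t * p k) / (t * f k p) := by
            rw [mul_div_mul_left _ _ (by linarith : t ≠ 0)]
          rw [heq]
          exact div_lt_div_of_pos_left (by positivity) hd0 hscal
        have hqc : Continuous q := by
          apply Continuous.add continuous_const
          exact continuous_id.smul continuous_const
        have hmaps : Set.MapsTo q (Set.Ici 0) (NonnegOrth K) := fun ε hε => hqorth ε hε
        have hdenc : ContinuousWithinAt (fun ε : ℝ => f k (q ε)) (Set.Ici 0) 0 := by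
          have := ContinuousWithinAt.comp ((hfcont k) (q 0) (hqorth 0 le_rfl))
            hqc.continuousWithinAt hmaps
          exact this
        have hcont : ContinuousWithinAt (fun ε : ℝ => (t * p k + ε) / f k (q ε))
            (Set.Ici 0) 0 := by
          apply ContinuousWithinAt.div
          · exact (continuous_const.add continuous_id).continuousWithinAt
          · exact hdenc
          · rw [hq0]; exact hd0.ne'
        have htend : Filter.Tendsto (fun ε : ℝ => (t * p k + ε) / f k (q ε)) (𝓝[>] 0)
            (𝓝 ((t * p k + 0) / f k (q 0))) :=
          hcont.mono_left (nhdsWithin_mono 0 Set.Ioi_subset_Ici_self)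
        have hev' : ∀ᶠ ε in 𝓝[>] (0:ℝ), u k p < (t * p k + ε) / f k (q ε) := by
          apply htend.eventually_const_lt
          rw [add_zero, hq0]
          exact hval
        filter_upwards [hev', self_mem_nhdsWithin] with ε h1 hε
        have hε' : (0:ℝ) < ε := hε
        have hqo := hqorth ε hε'.le
        rw [hu k _ hqo, hqk]
        exact h1
    obtain ⟨ε, ⟨hNq, hdom⟩, hε⟩ := ((hevN.and hevU).and self_mem_nhdsWithin).exists
    have hε' : (0:ℝ) < ε := hε
    exact ⟨q ε, ⟨hqorth ε hε'.le, hNq⟩, hdom⟩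
  · rintro ⟨p, hp, hNp, rfl⟩
    refine ⟨p, ⟨hp, hNp.le⟩, ?_, rfl⟩
    rintro ⟨p', ⟨hp', hNp'⟩, hdom⟩
    have hppos : ∀ k, 0 < p' k := by
      intro k
      rcases eq_or_lt_of_le (hp' k) with h | h
      · exfalso
        have h1 : u k p' = 0 := by rw [hu k p' hp', ← h, zero_div]
        have h2 : 0 ≤ u k p := by
          rw [hu k p hp]; exact div_nonneg (hp k) (hfpos k p hp).le
        have h3 := hdom k
        rw [h1] at h3
        linarith
      · exact h
    rcases Nat.eq_zero_or_pos K with hK | hK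
    · subst hK
      have hp0 : p = 0 := funext fun i => i.elim0
      rw [hp0, (hNzero 0).mpr rfl] at hNp
      linarith
    haveI : Nonempty (Fin K) := ⟨⟨0, hK⟩⟩
    obtain ⟨k0, hk0⟩ := Finite.exists_max (fun k => p k / p' k)
    set α : ℝ := p k0 / p' k0 with hα
    have hα0 : 0 ≤ α := div_nonneg (hp k0) (hppos k0).le
    have hle : ∀ k, p k ≤ α * p' k := fun k => (div_le_iff₀ (hppos k)).mp (hk0 k)
    have hαorth : α • p' ∈ NonnegOrth K := by
      intro k
      simp only [Pi.smul_apply, smul_eq_mul]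
      exact mul_nonneg hα0 (hp' k)
    have hNle : N p ≤ α * N p' := by
      calc N p ≤ N (α • p') :=
            hNmono p (α • p') hp (fun i => by simpa using hle i)
        _ = α * N p' := by rw [hNsmul, abs_of_nonneg hα0]
    have hα1 : 1 ≤ α := by
      have h1 : pbar ≤ α * pbar := by
        calc pbar = N p := hNp.symm
          _ ≤ α * N p' := hNle
          _ ≤ α * pbar := mul_le_mul_of_nonneg_left hNp' hα0
      nlinarith
    have hpk0 : p k0 = α * p' k0 := by
      rw [hα, div_mul_cancel₀ _ (hppos k0).ne']
    have hfle : f k0 p ≤ f k0 (α • p') :=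
      hfmono k0 (α • p') hαorth p hp (fun i => by simpa using hle i)
    have hkey : u k0 p' ≤ u k0 p := by
      rw [hu k0 p hp, hu k0 p' hp', hpk0]
      rcases eq_or_lt_of_le hα1 with h1 | h1
      · rw [← h1, one_smul] at hfle
        rw [← h1, one_mul]
        exact div_le_div_of_nonneg_left (hp' k0) (hfpos k0 p hp) hfle
      · have hsc := hfscal k0 p' hp' α h1
        have hflt : f k0 p < α * f k0 p' := lt_of_le_of_lt hfle hsc
        have heq : p' k0 / f k0 p' = (α * p' k0) / (α * f k0 p') := by
          rw [mul_div_mul_left _ _ (by linarith : α ≠ 0)]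
        rw [heq]
        exact (div_lt_div_of_pos_left (mul_pos (by linarith) (hppos k0))
          (hfpos k0 p hp) hflt).le
    exact absurd (hdom k0) (not_lt.mpr hkey)
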